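/- Let f* : Y → ℝ ∪ {+∞} be proper, lower semicontinuous and convex, K : X → Y bounded linear, σ_{k−1}, σ_k > 0, θ_k := σ_k/σ_{k−1}. Suppose y^k = prox_{σ_{k−1} f*}( y^{k−1} + σ_{k−1} K x^k ) and set ȳ^k := y^k + θ_k(y^k − y^{k−1}). Then for every y ∈ Y: ⟨ȳ^k − y^k − σ_k K x^k, y − ȳ^k⟩ ≥ σ_k( (1+θ_k) f*(y^k) − θ_k f*(y^{k−1}) − f*(y) ). -/

import Mathlib

open scoped RealInnerProductSpace

/-- Convexity for extended-real-valued functions. -/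
def ERealConvexOn {X : Type*} [AddCommGroup X] [Module ℝ X] (g : X → EReal) : Prop :=
  ∀ ⦃u v : X⦄ ⦃a b : ℝ⦄, 0 ≤ a → 0 ≤ b → a + b = 1 →
    g (a • u + b • v) ≤ (a : EReal) * g u + (b : EReal) * g v

/-- If `y^k = prox_{σ_{k−1} f*}(y^{k−1} + σ_{k−1}Kx^k)` and
`ȳ^k = y^k + θ_k(y^k − y^{k−1})` with `θ_k = σ_k/σ_{k−1}`, then for every `y`:
`⟨ȳ^k − y^k − σ_k Kx^k, y − ȳ^k⟩ ≥ σ_k((1+θ_k)f*(y^k) − θ_k f*(y^{k−1}) − f*(y))`. -/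
theorem extrapolated_dual_prox_inequality
    {X Y : Type*} [NormedAddCommGroup X] [InnerProductSpace ℝ X] [FiniteDimensional ℝ X]
    [NormedAddCommGroup Y] [InnerProductSpace ℝ Y] [FiniteDimensional ℝ Y]
    (K : X →L[ℝ] Y)
    (fs : Y → EReal)
    (hfbot : ∀ z : Y, fs z ≠ ⊥) (hftop : ∃ z : Y, fs z ≠ ⊤)
    (hflsc : LowerSemicontinuous fs) (hfconv : ERealConvexOn fs)
    (σkm1 σk θk : ℝ) (hσkm1 : 0 < σkm1) (hσk : 0 < σk) (hθk : θk = σk / σkm1)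
    (xk : X) (ykm1 yk ybk : Y)
    (hyk : ∀ z : Y,
      fs yk + ((1 / (2 * σkm1) * ‖yk - (ykm1 + σkm1 • K xk)‖ ^ 2 : ℝ) : EReal)
        ≤ fs z + ((1 / (2 * σkm1) * ‖z - (ykm1 + σkm1 • K xk)‖ ^ 2 : ℝ) : EReal))
    (hybk : ybk = yk + θk • (yk - ykm1)) :
    ∀ y : Y,
      (σk : EReal) * (((1 + θk : ℝ) : EReal) * fs yk - ((θk : ℝ) : EReal) * fs ykm1 - fs y)
        ≤ ((⟪ybk - yk - σk • K xk, y - ybk⟫ : ℝ) : EReal) := by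
  have hθ : 0 < θk := by rw [hθk]; positivity
  have hσeq : σk = θk * σkm1 := by rw [hθk]; field_simp
  set w : Y := ykm1 + σkm1 • K xk with hw
  -- fs yk is finite
  obtain ⟨z0, hz0⟩ := hftop
  have hyktop : fs yk ≠ ⊤ := by
    intro h
    have h2 := hyk z0
    have hz0' : fs z0 = ((fs z0).toReal : EReal) := (EReal.coe_toReal hz0 (hfbot z0)).symm
    rw [h, hz0', EReal.top_add_coe, ← EReal.coe_add] at h2
    exact EReal.coe_ne_top _ (top_le_iff.mp h2)
  set a : ℝ := (fs yk).toReal with ha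
  have hfa : fs yk = (a : EReal) := (EReal.coe_toReal hyktop (hfbot yk)).symm
  -- subgradient inequality, real form, division-free
  have key : ∀ z : Y, ∀ b : ℝ, fs z = (b : EReal) →
      σkm1 * a + ⟪w - yk, z - yk⟫ ≤ σkm1 * b := by
    intro z b hz
    set P : ℝ := ⟪w - yk, z - yk⟫ with hP
    set N : ℝ := ‖z - yk‖ ^ 2 with hNd
    have hN0 : 0 ≤ N := by rw [hNd]; positivity
    have hσne : σkm1 ≠ 0 := ne_of_gt hσkm1
    -- for every t ∈ (0,1], 0 ≤ (σkm1*b - σkm1*a - P) + t*(N/2)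
    have hstep : ∀ t : ℝ, 0 < t → t ≤ 1 →
        0 ≤ (σkm1 * b - σkm1 * a - P) + t * (N / 2) := by
      intro t ht0 ht1
      have hconv := hfconv (u := z) (v := yk) (a := t) (b := 1 - t) ht0.le (by linarith) (by ring)
      rw [hz, hfa] at hconv
      norm_cast at hconv
      have hmin := hyk (t • z + (1 - t) • yk)
      rw [hfa] at hmin
      have hchain : ((a + 1 / (2 * σkm1) * ‖yk - w‖ ^ 2 : ℝ) : EReal)
          ≤ (((t * b + (1 - t) * a) + 1 / (2 * σkm1) * ‖t • z + (1 - t) • yk - w‖ ^ 2 : ℝ) : EReal) := by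
        push_cast
        calc ((a : EReal) + ((1 / (2 * σkm1) * ‖yk - w‖ ^ 2 : ℝ) : EReal))
            ≤ fs (t • z + (1 - t) • yk) + ((1 / (2 * σkm1) * ‖t • z + (1 - t) • yk - w‖ ^ 2 : ℝ) : EReal) := hmin
          _ ≤ ((t * b + (1 - t) * a : ℝ) : EReal) + ((1 / (2 * σkm1) * ‖t • z + (1 - t) • yk - w‖ ^ 2 : ℝ) : EReal) := by
              exact add_le_add hconv le_rfl
          _ = _ := by push_cast; ring_nf
      rw [EReal.coe_le_coe_iff] at hchain
      have hexp : t • z + (1 - t) • yk - w = (yk - w) + t • (z - yk) := by module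
      rw [hexp, norm_add_sq_real, real_inner_smul_right, norm_smul] at hchain
      have hPP : ⟪yk - w, z - yk⟫ = -P := by
        rw [hP, show yk - w = -(w - yk) by abel, inner_neg_left]
      rw [hPP] at hchain
      simp only [Real.norm_eq_abs, mul_pow, sq_abs, ← hNd] at hchain
      -- hchain : a + 1/(2σ)*‖yk-w‖² ≤ t*b + (1-t)*a + 1/(2σ)*(‖yk-w‖² + 2*(t*(-P)) + t²*N)
      have h1 : 0 ≤ t * (b - a) + (1 / (2 * σkm1)) * (N * t ^ 2 - 2 * (t * P)) := by
        nlinarith [hchain]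
      have h3 : σkm1 * ((1 / (2 * σkm1)) * (N * t ^ 2 - 2 * (t * P)))
          = (1 / 2) * (N * t ^ 2 - 2 * (t * P)) := by
        field_simp
      have h2 : 0 ≤ σkm1 * (t * (b - a)) + (1 / 2) * (N * t ^ 2 - 2 * (t * P)) := by
        nlinarith [mul_nonneg hσkm1.le h1, h3]
      -- h2 says 0 ≤ t * ((σb - σa - P) + t*(N/2))
      by_contra hneg
      push_neg at hneg
      nlinarith [h2, mul_pos ht0 (neg_pos.mpr hneg)]
    -- pass to the limit t → 0
    by_contra hcon
    push_neg at hcon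
    set c : ℝ := σkm1 * b - σkm1 * a - P with hc
    set d : ℝ := N / 2 with hd
    have hd0 : 0 ≤ d := by rw [hd]; positivity
    have hclt : c < 0 := by rw [hc]; linarith
    have hd1 : (0:ℝ) < d + 1 := by linarith
    set t : ℝ := min 1 ((-c) / (d + 1)) with htdef
    have ht0 : 0 < t := lt_min one_pos (div_pos (neg_pos.mpr hclt) hd1)
    have ht1 : t ≤ 1 := min_le_left _ _
    have h2 := hstep t ht0 ht1
    have h4 : t * d ≤ ((-c) / (d + 1)) * d :=
      mul_le_mul_of_nonneg_right (min_le_right _ _) hd0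
    have h5 : 0 ≤ c + ((-c) / (d + 1)) * d := by linarith
    have h6 : 0 ≤ (c + ((-c) / (d + 1)) * d) * (d + 1) := mul_nonneg h5 hd1.le
    have h7 : (c + ((-c) / (d + 1)) * d) * (d + 1) = c := by field_simp; ring
    rw [h7] at h6
    linarith
  -- main argument
  intro y
  by_cases hb : fs ykm1 = ⊤
  · rw [hb, hfa, EReal.coe_mul_top_of_pos hθ, EReal.sub_top, EReal.bot_sub,
      EReal.mul_bot_of_pos (by exact_mod_cast hσk)]
    exact bot_le
  · set b : ℝ := (fs ykm1).toReal with hbdef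
    have hfb : fs ykm1 = (b : EReal) := (EReal.coe_toReal hb (hfbot ykm1)).symm
    by_cases hcy : fs y = ⊤
    · rw [hcy, hfa, hfb, EReal.sub_top, EReal.mul_bot_of_pos (by exact_mod_cast hσk)]
      exact bot_le
    · set c : ℝ := (fs y).toReal with hcdef
      have hfc : fs y = (c : EReal) := (EReal.coe_toReal hcy (hfbot y)).symm
      rw [hfa, hfb, hfc]
      norm_cast
      have hky := key y c hfc
      have hkb := key ykm1 b hfb
      have hI : ⟪ybk - yk - σk • K xk, y - ybk⟫
          = -(θk * ⟪w - yk, y - yk⟫) - θk ^ 2 * ⟪w - yk, ykm1 - yk⟫ := by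
        have e1 : ybk - yk - σk • K xk = -(θk • (w - yk)) := by
          rw [hybk, hw, hσeq]; module
        have e2 : y - ybk = (y - yk) + θk • (ykm1 - yk) := by
          rw [hybk]; module
        rw [e1, e2, inner_neg_left, real_inner_smul_left, inner_add_right,
          real_inner_smul_right]
        ring
      rw [hI, hσeq]
      nlinarith [hky, hkb, mul_le_mul_of_nonneg_left hky hθ.le,
        mul_le_mul_of_nonneg_left hkb (mul_nonneg hθ.le hθ.le)]
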